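/- Let G be a finite group and H ≤ G a nontrivial normal subgroup. Then D_H > 1 − 1/|H|; in particular D_H ≥ 1/2. -/

import Mathlib

open CategoryTheory Finset
open scoped Classical

/-- `D_H`: the total variation distance between the weak quantum Fourier sampling
distributions for the hidden subgroup `H` and for the trivial subgroup, namely
`(1/|G|) · Σ_ρ d_ρ · |Σ_{h ∈ H, h ≠ e} χ_ρ(h)|`, where `ρ` runs over the family
of irreducible representations. -/
noncomputable def weakDist {G : Type} [Group G] [Fintype G] {ι : Type} [Fintype ι]
    (ρ : ι → FDRep ℂ G) (H : Subgroup G) : ℝ :=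
  (Fintype.card G : ℝ)⁻¹ *
    ∑ i : ι, (Module.finrank ℂ (ρ i) : ℝ) *
      ‖∑ h ∈ Finset.univ.filter (fun h : G => h ∈ H ∧ h ≠ 1), (ρ i).character h‖

/-- `ρ : ι → FDRep ℂ G` is a complete family of pairwise non-isomorphic irreducible
complex representations of `G` (one per isomorphism class). -/
def IsCompleteIrrepFamily {G : Type} [Group G] {ι : Type} (ρ : ι → FDRep ℂ G) : Prop :=
  (∀ i, Simple (ρ i)) ∧
  (∀ i j, Nonempty (ρ i ≅ ρ j) → i = j) ∧
  (∀ V : FDRep ℂ G, Simple V → ∃ i, Nonempty (ρ i ≅ V))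

variable {G : Type} [Group G] [Fintype G]


noncomputable def subRep (Y : FDRep ℂ G) (K : Submodule ℂ Y) (hK : ∀ g : G, ∀ x ∈ K, Y.ρ g x ∈ K) :
    FDRep ℂ G :=
  FDRep.of (V := ↥K)
    { toFun := fun g => (Y.ρ g).restrict (fun x hx => hK g x hx)
      map_one' := by ext x; simp
      map_mul' := fun g h => by ext x; simp }

noncomputable def subRepHom (Y : FDRep ℂ G) (K : Submodule ℂ Y) (hK : ∀ g : G, ∀ x ∈ K, Y.ρ g x ∈ K) :
    subRep Y K hK ⟶ Y where
  hom := FGModuleCat.ofHom K.subtype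
  comm := fun g => by ext x; rfl

theorem hom_comm_apply' {V W : FDRep ℂ G} (f : V ⟶ W) (g : G) (v : V) :
    f.hom (V.ρ g v) = W.ρ g (f.hom v) :=
  congrArg (fun φ : V.V ⟶ W.V => φ.hom.hom v) (f.comm g)

theorem ker_eq_bot_of_mono {Y X : FDRep ℂ G} (f : Y ⟶ X) [Mono f] : LinearMap.ker f.hom.hom.hom = ⊥ := by
  have hK : ∀ g : G, ∀ x ∈ LinearMap.ker f.hom.hom.hom, Y.ρ g x ∈ LinearMap.ker f.hom.hom.hom := by
    intro g x hx
    simp only [LinearMap.mem_ker] at hx ⊢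
    have h1 : f.hom (Y.ρ g x) = X.ρ g (f.hom x) := hom_comm_apply' f g x
    exact h1.trans (by rw [show ConcreteCategory.hom f.hom x = 0 from hx, map_zero])
  have h0 : subRepHom Y _ hK ≫ f = 0 := by
    ext x
    exact x.2
  have hz := (cancel_mono (f := f) (g := subRepHom Y _ hK) (h := 0)).mp (by simpa using h0)
  ext x
  simp only [LinearMap.mem_ker, Submodule.mem_bot]
  constructor
  · intro hx
    have := congrArg (fun (φ : subRep Y _ hK ⟶ Y) => φ.hom ⟨x, hx⟩) hz
    exact this
  · intro hx; simp [hx]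

section ofModule
variable (G : Type) [Group G] [Fintype G] (N : Type) [AddCommGroup N]
  [Module (MonoidAlgebra ℂ G) N]

noncomputable instance fdRS [Module.Finite (MonoidAlgebra ℂ G) N] :
    Module.Finite ℂ (RestrictScalars ℂ (MonoidAlgebra ℂ G) N) := by
  have h1 : FiniteDimensional ℂ (MonoidAlgebra ℂ G) :=
    FiniteDimensional.of_injective (MonoidAlgebra.coeffLinearEquiv ℂ).toLinearMap
      (MonoidAlgebra.coeffLinearEquiv ℂ).injective
  letI : Module (MonoidAlgebra ℂ G) (RestrictScalars ℂ (MonoidAlgebra ℂ G) N) :=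
    RestrictScalars.moduleOrig ℂ (MonoidAlgebra ℂ G) N
  letI h2 : Module.Finite (MonoidAlgebra ℂ G) (RestrictScalars ℂ (MonoidAlgebra ℂ G) N) :=
    ‹Module.Finite (MonoidAlgebra ℂ G) N›
  exact Module.Finite.trans (MonoidAlgebra ℂ G) (RestrictScalars ℂ (MonoidAlgebra ℂ G) N)

noncomputable def fdrepOfModule [Module.Finite (MonoidAlgebra ℂ G) N] : FDRep ℂ G :=
  @FDRep.of ℂ G _ _ (RestrictScalars ℂ (MonoidAlgebra ℂ G) N) _ (RestrictScalars.module ℂ (MonoidAlgebra ℂ G) N) (fdRS G N) (Representation.ofModule (k := ℂ) (G := G) N)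

theorem simple_fdrepOfModule [Module.Finite (MonoidAlgebra ℂ G) N] [IsSimpleModule (MonoidAlgebra ℂ G) N] :
    Simple (fdrepOfModule G N) := by
  constructor
  intro Y f hmono
  constructor
  · -- IsIso f → f ≠ 0
    intro hiso hf0
    have : Nontrivial N := IsSimpleModule.nontrivial (MonoidAlgebra ℂ G) N
    have hnt : Nontrivial (RestrictScalars ℂ (MonoidAlgebra ℂ G) N) := this
    obtain ⟨x, y, hxy⟩ := hnt
    obtain ⟨w, _, hw2⟩ := hiso.out
    rw [hf0, Limits.comp_zero] at hw2
    have hx : ∀ z : RestrictScalars ℂ (MonoidAlgebra ℂ G) N,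
        z = (0 : RestrictScalars ℂ (MonoidAlgebra ℂ G) N) := by
      intro z
      have h2 := congrArg
        (fun (φ : fdrepOfModule G N ⟶ fdrepOfModule G N) => Action.Hom.hom φ z) hw2
      exact h2.symm
    exact hxy ((hx x).trans (hx y).symm)
  · -- f ≠ 0 → IsIso f
    intro hf
    have hker := ker_eq_bot_of_mono f
    have hinj : Function.Injective (f.hom.hom.hom : Y →ₗ[ℂ] fdrepOfModule G N) :=
      LinearMap.ker_eq_bot.mp hker
    -- range as a ℂ-submodule, invariant
    set R : Submodule ℂ (fdrepOfModule G N) := LinearMap.range f.hom.hom.hom with hR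
    have hRinv : ∀ g : G, ∀ x ∈ R, (fdrepOfModule G N).ρ g x ∈ R := by
      rintro g x ⟨y, rfl⟩
      exact ⟨Y.ρ g y, hom_comm_apply' f g y⟩
    have hRalg : ∀ (a : MonoidAlgebra ℂ G), ∀ x ∈ R, Representation.asAlgebraHom (fdrepOfModule G N).ρ a x ∈ R := by
      intro a x hx
      induction a using MonoidAlgebra.induction_linear with
      | zero => simp
      | add p q hp hq => rw [map_add]; exact R.add_mem hp hq
      | single g c =>
          rw [Representation.asAlgebraHom_single]
          exact R.smul_mem c (hRinv g x hx)
    -- lift to A-submodule of N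
    set eN := RestrictScalars.addEquiv ℂ (MonoidAlgebra ℂ G) N with heN
    have hact : ∀ (a : MonoidAlgebra ℂ G) (m : RestrictScalars ℂ (MonoidAlgebra ℂ G) N),
        Representation.asAlgebraHom (fdrepOfModule G N).ρ a m = eN.symm (a • eN m) := by
      intro a m
      have : (fdrepOfModule G N).ρ = Representation.ofModule (k := ℂ) (G := G) N := rfl
      rw [this]
      exact Representation.ofModule_asAlgebraHom_apply_apply (k := ℂ) (G := G) N a m
    let R' : Submodule (MonoidAlgebra ℂ G) N :=
    { carrier := eN '' (R : Set (fdrepOfModule G N))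
      add_mem' := by
        rintro a b ⟨x, hx, rfl⟩ ⟨y, hy, rfl⟩
        exact ⟨x + y, R.add_mem hx hy, map_add _ _ _⟩
      zero_mem' := ⟨0, R.zero_mem, map_zero _⟩
      smul_mem' := by
        rintro a x ⟨y, hy, rfl⟩
        refine ⟨Representation.asAlgebraHom (fdrepOfModule G N).ρ a y, hRalg a y hy, ?_⟩
        rw [hact]
        simp }
    have : R' = ⊥ ∨ R' = ⊤ := eq_bot_or_eq_top R'
    rcases this with hbot | htop
    · exfalso
      apply hf
      ext v
      have : eN (f.hom v) ∈ R' := ⟨f.hom v, ⟨v, rfl⟩, rfl⟩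
      rw [hbot] at this
      simp only [Submodule.mem_bot] at this
      have : f.hom v = 0 := by
        apply eN.injective
        exact this.trans (map_zero eN).symm
      exact this
    · have hsurj : Function.Surjective (f.hom.hom.hom : Y →ₗ[ℂ] fdrepOfModule G N) := by
        intro x
        have : eN x ∈ R' := htop ▸ Submodule.mem_top
        obtain ⟨y, hy, hEq⟩ := this
        obtain ⟨z, rfl⟩ := hy
        exact ⟨z, eN.injective hEq⟩
      let e := LinearEquiv.ofBijective (f.hom.hom.hom : Y →ₗ[ℂ] fdrepOfModule G N) ⟨hinj, hsurj⟩
      have hfe : ∀ z, f.hom (e.symm z) = z := fun z => e.apply_symm_apply z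
      have hcomm : ∀ g : G, ∀ x, e.symm ((fdrepOfModule G N).ρ g x) = Y.ρ g (e.symm x) := by
        intro g x
        apply hinj
        change f.hom _ = f.hom _
        rw [hfe, hom_comm_apply' f g, hfe]
      refine ⟨⟨⟨ObjectProperty.homMk (ConcreteCategory.ofHom (C := ModuleCat ℂ) (X := (fdrepOfModule G N).V.obj) (Y := Y.V.obj) e.symm.toLinearMap), fun g => ?_⟩, ?_, ?_⟩⟩
      · ext x
        exact (hcomm g x)
      · ext x
        exact e.symm_apply_apply x
      · ext x
        exact e.apply_symm_apply x
end ofModule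

theorem intertwine_asAlgebraHom {G : Type} [Group G] {V W : FDRep ℂ G} (f : V →ₗ[ℂ] W)
    (hf : ∀ g : G, ∀ v, f (V.ρ g v) = W.ρ g (f v)) (a : MonoidAlgebra ℂ G) (v : V) :
    f (Representation.asAlgebraHom V.ρ a v) = Representation.asAlgebraHom W.ρ a (f v) := by
  induction a using MonoidAlgebra.induction_linear with
  | zero => simp
  | add x y hx hy => simp only [map_add, LinearMap.add_apply, map_add, hx, hy]
  | single g c => simp only [Representation.asAlgebraHom_single, LinearMap.smul_apply,
      map_smul, hf g]

theorem card_le_sum_sq {G : Type} [Group G] [Fintype G] {ι : Type} [Fintype ι]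
    (ρ : ι → FDRep ℂ G) (hρ : IsCompleteIrrepFamily ρ) :
    (Fintype.card G : ℕ) ≤ ∑ i, Module.finrank ℂ (ρ i) * Module.finrank ℂ (ρ i) := by
  haveI : NeZero (Fintype.card G : ℂ) := ⟨by exact_mod_cast Fintype.card_ne_zero⟩
  haveI hss : IsSemisimpleRing (MonoidAlgebra ℂ G) := inferInstance
  set Φ : MonoidAlgebra ℂ G →ₗ[ℂ] (∀ i, Module.End ℂ (ρ i)) :=
    LinearMap.pi (fun i => (Representation.asAlgebraHom (ρ i).ρ).toLinearMap) with hΦ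
  have hinj : Function.Injective Φ := by
    rw [← LinearMap.ker_eq_bot]
    rw [Submodule.eq_bot_iff]
    intro a ha
    rw [LinearMap.mem_ker] at ha
    have ha' : ∀ i, Representation.asAlgebraHom (ρ i).ρ a = 0 := fun i => congrFun ha i
    -- a kills every simple submodule of the monoid algebra
    have key : ∀ (N : Submodule (MonoidAlgebra ℂ G) (MonoidAlgebra ℂ G)),
        IsSimpleModule (MonoidAlgebra ℂ G) ↥N → ∀ x ∈ N, a * x = 0 := by
      intro N hN x hx
      haveI := hN
      haveI : Module.Finite (MonoidAlgebra ℂ G) ↥N := ⟨IsNoetherian.noetherian ⊤⟩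
      haveI hs := simple_fdrepOfModule G ↥N
      obtain ⟨i, ⟨e⟩⟩ := hρ.2.2 (fdrepOfModule G ↥N) hs
      set φ := FDRep.isoToLinearEquiv e with hφ
      have hconj : ∀ g : G, ∀ v, φ ((ρ i).ρ g v) = (fdrepOfModule G ↥N).ρ g (φ v) := by
        intro g v
        rw [FDRep.Iso.conj_ρ e g]
        simp [LinearEquiv.conj_apply, hφ]
      have h0 : ∀ v, Representation.asAlgebraHom (fdrepOfModule G ↥N).ρ a (φ v) = 0 := by
        intro v
        have h4 := intertwine_asAlgebraHom (V := ρ i) (W := fdrepOfModule G ↥N)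
          φ.toLinearMap hconj a v
        rw [ha' i] at h4
        simpa using h4.symm
      have h0' : ∀ m, Representation.asAlgebraHom (fdrepOfModule G ↥N).ρ a m = 0 := by
        intro m
        have := h0 (φ.symm m)
        rwa [φ.apply_symm_apply] at this
      have h1 : ∀ n : ↥N, a • n = 0 := by
        intro n
        have h3 := (Representation.ofModule_asAlgebraHom_apply_apply (k := ℂ) (G := G) (M := ↥N) a
            ((RestrictScalars.addEquiv ℂ (MonoidAlgebra ℂ G) ↥N).symm n)).symm.trans
            (h0' ((RestrictScalars.addEquiv ℂ (MonoidAlgebra ℂ G) ↥N).symm n))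
        apply_fun (RestrictScalars.addEquiv ℂ (MonoidAlgebra ℂ G) ↥N) at h3
        simp only [AddEquiv.apply_symm_apply, map_zero] at h3
        exact h3
      have h5 : a • (⟨x, hx⟩ : ↥N) = 0 := h1 ⟨x, hx⟩
      have h6 := congrArg (Subtype.val) h5
      simpa only [SetLike.val_smul, smul_eq_mul, ZeroMemClass.coe_zero] using h6
    have htop : (1 : MonoidAlgebra ℂ G) ∈
        sSup { m : Submodule (MonoidAlgebra ℂ G) (MonoidAlgebra ℂ G) |
          IsSimpleModule (MonoidAlgebra ℂ G) ↥m } := by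
      rw [IsSemisimpleModule.sSup_simples_eq_top]
      trivial
    rw [sSup_eq_iSup'] at htop
    have hz : a * 1 = 0 := by
      refine Submodule.iSup_induction (motive := fun y => a * y = 0) _ htop
        (fun m x hxm => ?_) (by simp) (fun x y hx hy => ?_)
      · exact key m m.2 x hxm
      · show a * (x + y) = 0
        have hx' : a * x = 0 := hx
        have hy' : a * y = 0 := hy
        rw [mul_add, hx', hy', add_zero]
    simpa using hz
  have hle := LinearMap.finrank_le_finrank_of_injective hinj
  have h1 : Module.finrank ℂ (MonoidAlgebra ℂ G) = Fintype.card G := by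
    rw [(MonoidAlgebra.coeffLinearEquiv ℂ).finrank_eq]; simp
  have h2 : Module.finrank ℂ (∀ i, Module.End ℂ (ρ i))
      = ∑ i, Module.finrank ℂ (ρ i) * Module.finrank ℂ (ρ i) := by
    rw [Module.finrank_pi_fintype]
    exact Finset.sum_congr rfl (fun i _ => by rw [Module.finrank_linearMap])
  rw [h1, h2] at hle
  exact hle

open Module in
theorem subgroup_char_dichotomy {G : Type} [Group G] [Fintype G] (V : FDRep ℂ G) [hVs : Simple V]
    (H : Subgroup G) (hnormal : H.Normal) :
    (∑ h ∈ Finset.univ.filter (· ∈ H), V.character h) = 0 ∨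
    (∑ h ∈ Finset.univ.filter (· ∈ H), V.character h)
      = (Nat.card H : ℂ) * (Module.finrank ℂ V : ℂ) := by
  classical
  set S : Finset G := Finset.univ.filter (· ∈ H) with hS
  have hmemS : ∀ {h : G}, h ∈ S ↔ h ∈ H := by intro h; simp [hS]
  have hcardS : S.card = Nat.card H := by
    rw [Nat.card_eq_fintype_card, Fintype.card_subtype]
  set Q : V →ₗ[ℂ] V := ∑ h ∈ S, (V.ρ h : V →ₗ[ℂ] V) with hQ
  have hQg : ∀ g : G, Q ∘ₗ (V.ρ g : V →ₗ[ℂ] V) = (V.ρ g : V →ₗ[ℂ] V) ∘ₗ Q := by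
    intro g
    have h1 : (V.ρ g : V →ₗ[ℂ] V) * Q = Q * (V.ρ g : V →ₗ[ℂ] V) := by
      rw [hQ, Finset.mul_sum, Finset.sum_mul]
      refine Finset.sum_equiv (MulAut.conj g).toEquiv ?_ ?_
      · intro h
        simp only [hmemS, MulAut.conj_apply, MulEquiv.toEquiv_eq_coe, EquivLike.coe_coe]
        exact ⟨fun hh => hnormal.conj_mem h hh g, fun hh => by
          have := hnormal.conj_mem _ hh g⁻¹
          simpa [mul_assoc] using this⟩
      · intro h _
        simp only [MulEquiv.toEquiv_eq_coe, EquivLike.coe_coe, MulAut.conj_apply]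
        rw [← map_mul, ← map_mul]
        congr 1
        group
    exact h1.symm
  -- the morphism in FDRep with underlying map Q
  set φ : V ⟶ V := ⟨FGModuleCat.ofHom Q, fun g => by ext x; exact LinearMap.congr_fun (hQg g) x⟩ with hφ
  -- Q is c • id
  have hid : (𝟙 V : V ⟶ V) ≠ 0 := id_nonzero V
  have hfin1 : Module.finrank ℂ (V ⟶ V) = 1 := by
    rw [FDRep.finrank_hom_simple_simple V V]
    simp
  obtain ⟨c, hc⟩ : ∃ c : ℂ, c • (𝟙 V : V ⟶ V) = φ :=
    (finrank_eq_one_iff_of_nonzero' (𝟙 V : V ⟶ V) hid).mp hfin1 φ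
  have hQc : Q = c • LinearMap.id := by
    have := congrArg (fun (ψ : V ⟶ V) => ψ.hom) hc
    simp only [Action.smul_hom, Action.id_hom] at this
    exact congrArg (fun ψ : V.V ⟶ V.V => ψ.hom.hom) this.symm
  -- absorption and idempotency
  have hQh : ∀ h0 ∈ S, Q * (V.ρ h0 : V →ₗ[ℂ] V) = Q := by
    intro h0 hh0
    rw [hQ, Finset.sum_mul]
    refine Finset.sum_equiv (Equiv.mulRight h0) ?_ ?_
    · intro h
      simp only [hmemS, Equiv.coe_mulRight]
      exact ⟨fun hh => H.mul_mem hh (hmemS.mp hh0), fun hh => by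
        have := H.mul_mem hh (H.inv_mem (hmemS.mp hh0))
        simpa [mul_assoc] using this⟩
    · intro h _
      simp only [Equiv.coe_mulRight]
      rw [← map_mul]
  have hQQ : Q * Q = (S.card : ℂ) • Q := by
    have expand : Q * Q = ∑ h0 ∈ S, Q * (V.ρ h0 : V →ₗ[ℂ] V) := by
      conv_lhs => rw [show Q * Q = Q * (∑ h ∈ S, (V.ρ h : V →ₗ[ℂ] V)) from by rw [← hQ]]
      rw [Finset.mul_sum]
    rw [expand, Finset.sum_congr rfl hQh, Finset.sum_const, ← Nat.cast_smul_eq_nsmul ℂ]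
  -- V is nontrivial
  have hnt : Nontrivial V := by
    by_contra hsub
    rw [not_nontrivial_iff_subsingleton] at hsub
    apply hid
    apply Action.Hom.ext
    apply FGModuleCat.hom_ext
    apply LinearMap.ext
    intro v
    exact hsub.elim _ _
  -- c * c = card * c
  have hcc : c * c = (S.card : ℂ) * c := by
    obtain ⟨v, hv⟩ := exists_ne (0 : V)
    have h2 := congrArg (fun (T : V →ₗ[ℂ] V) => T v) hQQ
    simp only [hQc, Module.End.mul_apply, LinearMap.smul_apply, LinearMap.id_apply,
      map_smul] at h2
    have h3 : (c * c) • v = ((S.card : ℂ) * c) • v := by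
      rw [mul_smul, mul_smul]
      simpa using h2
    have h4 := sub_eq_zero.mpr h3
    rw [← sub_smul] at h4
    rcases smul_eq_zero.mp h4 with h5 | h5
    · exact sub_eq_zero.mp h5
    · exact absurd h5 hv
  -- trace computation
  have htr : (∑ h ∈ S, V.character h) = c * (Module.finrank ℂ V : ℂ) := by
    have h1 : (∑ h ∈ S, V.character h) = LinearMap.trace ℂ V Q := by
      rw [hQ, map_sum]
      rfl
    rw [h1, hQc, map_smul, LinearMap.trace_id]
    rfl
  have hfact : c * (c - (S.card : ℂ)) = 0 := by ring_nf; linear_combination hcc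
  rcases mul_eq_zero.mp hfact with h | h
  · left
    rw [htr, h, zero_mul]
  · right
    rw [htr, sub_eq_zero.mp h, hcardS]

theorem abs_lower {G : Type} [Group G] [Fintype G] (V : FDRep ℂ G) [hVs : Simple V]
    (H : Subgroup G) (hnormal : H.Normal) (hH : H ≠ ⊥) :
    (Module.finrank ℂ V : ℝ) ≤
      ‖∑ h ∈ Finset.univ.filter (fun h : G => h ∈ H ∧ h ≠ 1), V.character h‖ := by
  classical
  have hfilter : Finset.univ.filter (fun h : G => h ∈ H ∧ h ≠ 1)
      = (Finset.univ.filter (· ∈ H)).filter (· ≠ 1) := by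
    rw [Finset.filter_filter]
  have hsplit : (∑ h ∈ Finset.univ.filter (· ∈ H), V.character h)
      = (∑ h ∈ Finset.univ.filter (fun h : G => h ∈ H ∧ h ≠ 1), V.character h)
        + (Module.finrank ℂ V : ℂ) := by
    rw [← Finset.sum_filter_add_sum_filter_not (Finset.univ.filter (· ∈ H)) (· ≠ 1), hfilter]
    congr 1
    have h1 : (Finset.univ.filter (· ∈ H)).filter (fun h => ¬ h ≠ 1) = {1} := by
      ext x
      simp only [Finset.mem_filter, Finset.mem_univ, true_and, not_not, Finset.mem_singleton]
      constructor
      · rintro ⟨_, rfl⟩; rfl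
      · rintro rfl; exact ⟨H.one_mem, rfl⟩
    rw [h1, Finset.sum_singleton, FDRep.char_one]
  have hcard2 : (2 : ℝ) ≤ (Nat.card H : ℝ) := by
    have hnt : Nontrivial ↥H := H.nontrivial_iff_ne_bot.mpr hH
    have h1 : 1 < Fintype.card ↥H := Fintype.one_lt_card
    have h2 : Nat.card ↥H = Fintype.card ↥H := Nat.card_eq_fintype_card
    have : 2 ≤ Nat.card ↥H := by omega
    exact_mod_cast this
  rcases subgroup_char_dichotomy V H hnormal with h | h
  · rw [h] at hsplit
    have h2 : (∑ h ∈ Finset.univ.filter (fun h : G => h ∈ H ∧ h ≠ 1), V.character h)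
        = -(Module.finrank ℂ V : ℂ) := by linear_combination -hsplit
    rw [h2]
    rw [norm_neg]
    rw [Complex.norm_natCast]
  · rw [h] at hsplit
    have h2 : (∑ h ∈ Finset.univ.filter (fun h : G => h ∈ H ∧ h ≠ 1), V.character h)
        = (((Nat.card H : ℝ) - 1) * (Module.finrank ℂ V : ℝ) : ℝ) := by
      push_cast
      linear_combination -hsplit
    rw [h2, Complex.norm_real, Real.norm_eq_abs, abs_of_nonneg (by nlinarith)]
    · nlinarith [Nat.cast_nonneg (α := ℝ) (Module.finrank ℂ V)]


/-- a nontrivial normal subgroup satisfies `D_H > 1 - 1/|H|`, and in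
particular `D_H ≥ 1/2`. -/
theorem stmt_6 {G : Type} [Group G] [Fintype G] {ι : Type} [Fintype ι]
    (ρ : ι → FDRep ℂ G) (hρ : IsCompleteIrrepFamily ρ)
    (H : Subgroup G) (hH : H ≠ ⊥) (hnormal : H.Normal) :
    1 - 1 / (Nat.card H : ℝ) < weakDist ρ H ∧ 1 / 2 ≤ weakDist ρ H := by
  have hwd : (1 : ℝ) ≤ weakDist ρ H := by
    rw [weakDist]
    have hterm : ∀ i ∈ Finset.univ (α := ι),
        (Module.finrank ℂ (ρ i) : ℝ) * (Module.finrank ℂ (ρ i) : ℝ)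
        ≤ (Module.finrank ℂ (ρ i) : ℝ) *
          ‖∑ h ∈ Finset.univ.filter (fun h : G => h ∈ H ∧ h ≠ 1),
            (ρ i).character h‖ := by
      intro i _
      haveI := hρ.1 i
      exact mul_le_mul_of_nonneg_left (abs_lower (ρ i) H hnormal hH) (Nat.cast_nonneg _)
    have hcast : (Fintype.card G : ℝ)
        ≤ ∑ i, (Module.finrank ℂ (ρ i) : ℝ) * (Module.finrank ℂ (ρ i) : ℝ) := by
      have := card_le_sum_sq ρ hρ
      exact_mod_cast this
    have hsum := le_trans hcast (Finset.sum_le_sum hterm)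
    have hpos : (0 : ℝ) < (Fintype.card G : ℝ) := by exact_mod_cast Fintype.card_pos
    calc (1 : ℝ) = (Fintype.card G : ℝ)⁻¹ * (Fintype.card G : ℝ) := by
          field_simp
      _ ≤ _ := by
          apply mul_le_mul_of_nonneg_left hsum
          positivity
  have hHpos : (0 : ℝ) < (Nat.card H : ℝ) := by
    have : 0 < Nat.card H := Nat.card_pos
    exact_mod_cast this
  constructor
  · have : 0 < 1 / (Nat.card H : ℝ) := by positivity
    linarith
  · linarith
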